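/- arXiv:1903.10031 — 7 statements merged into one kernel-verified Lean document; each statement's English description precedes it below -/
import Mathlib

section
/- Let H₁ and H₂ be reflexive patterns such that every H₁-arc-coloured digraph has an independent H₁-absorbent set, and likewise for H₂. Then every (H₁ • H₂)-arc-coloured digraph has an independent (H₁ • H₂)-absorbent set, where H₁ • H₂ is the linear sum of the patterns (disjoint union of H₁ and H₂ plus all arcs from V(H₁) to V(H₂)). -/
/-- The list of colours along a list of vertices, given an arc-colouring `c`. -/
def colourList {α β : Type*} (c : β → β → α) : List β → List α
  | a :: b :: t => c a b :: colourList c (b :: t)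
  | _ => []

/-- An `H`-walk in the `H`-arc-coloured digraph `(D, c)`: a directed walk with at least one
arc whose sequence of arc-colours is a directed walk in the pattern `H`. -/
def IsHWalk {α β : Type*} (H : α → α → Prop) (D : β → β → Prop) (c : β → β → α)
    (l : List β) : Prop :=
  2 ≤ l.length ∧ l.Chain' D ∧ (colourList c l).Chain' H

/-- An `H`-path: an `H`-walk whose vertices are pairwise distinct. -/
def IsHPath {α β : Type*} (H : α → α → Prop) (D : β → β → Prop) (c : β → β → α)
    (l : List β) : Prop :=
  IsHWalk H D c l ∧ l.Nodup

/-- `u` reaches `v` by `H`-paths. -/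
def HPathReach {α β : Type*} (H : α → α → Prop) (D : β → β → Prop) (c : β → β → α)
    (u v : β) : Prop :=
  ∃ l, IsHPath H D c l ∧ l.head? = some u ∧ l.getLast? = some v

/-- `u` reaches `v` by `H`-walks. -/
def HWalkReach {α β : Type*} (H : α → α → Prop) (D : β → β → Prop) (c : β → β → α)
    (u v : β) : Prop :=
  ∃ l, IsHWalk H D c l ∧ l.head? = some u ∧ l.getLast? = some v

/-- A digraph (binary relation) is loopless. -/
def Loopless {β : Type*} (D : β → β → Prop) : Prop := ∀ v, ¬ D v v

/-- `S` is an independent set of the digraph `D` (no arc of `D` joins two of its vertices). -/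
def Indep {β : Type*} (D : β → β → Prop) (S : Set β) : Prop :=
  ∀ u ∈ S, ∀ v ∈ S, ¬ D u v

/-- `S` is independent by `H`-paths. -/
def HIndep {α β : Type*} (H : α → α → Prop) (D : β → β → Prop) (c : β → β → α)
    (S : Set β) : Prop :=
  ∀ u ∈ S, ∀ v ∈ S, u ≠ v → ¬ HPathReach H D c u v

/-- `S` is absorbent by `H`-paths. -/
def HAbsorbent {α β : Type*} (H : α → α → Prop) (D : β → β → Prop) (c : β → β → α)
    (S : Set β) : Prop :=
  ∀ u ∉ S, ∃ v ∈ S, HPathReach H D c u v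

/-- An `H`-kernel: independent and absorbent by `H`-paths. -/
def HKernel {α β : Type*} (H : α → α → Prop) (D : β → β → Prop) (c : β → β → α)
    (S : Set β) : Prop :=
  HIndep H D c S ∧ HAbsorbent H D c S

/-- `S` is independent by `H`-walks. -/
def WIndep {α β : Type*} (H : α → α → Prop) (D : β → β → Prop) (c : β → β → α)
    (S : Set β) : Prop :=
  ∀ u ∈ S, ∀ v ∈ S, u ≠ v → ¬ HWalkReach H D c u v

/-- `S` is absorbent by `H`-walks. -/
def WAbsorbent {α β : Type*} (H : α → α → Prop) (D : β → β → Prop) (c : β → β → α)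
    (S : Set β) : Prop :=
  ∀ u ∉ S, ∃ v ∈ S, HWalkReach H D c u v

/-- A kernel by `H`-walks. -/
def WKernel {α β : Type*} (H : α → α → Prop) (D : β → β → Prop) (c : β → β → α)
    (S : Set β) : Prop :=
  WIndep H D c S ∧ WAbsorbent H D c S

/-- The complement of a pattern: `(u,v)` (with `u ≠ v`) is an arc iff it is not an arc of `H`. -/
def complRel {α : Type*} (H : α → α → Prop) : α → α → Prop :=
  fun u v => u ≠ v ∧ ¬ H u v

/-- `G` contains a directed cycle of odd length. -/
def HasOddDicycle {α : Type*} (G : α → α → Prop) : Prop :=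
  ∃ (x : α) (l : List α), (x :: l).Nodup ∧ Odd (x :: l).length ∧ (x :: l).Chain' G ∧
    G ((x :: l).getLast (List.cons_ne_nil x l)) x

/-- The list of arcs (consecutive pairs) of a list of vertices. -/
def arcsOf {β : Type*} (l : List β) : List (β × β) := l.zip l.tail


/-- The linear sum of two patterns: disjoint union plus all arcs from `V(H₁)` to `V(H₂)`. -/
def sumH {α₁ α₂ : Type} (H₁ : α₁ → α₁ → Prop) (H₂ : α₂ → α₂ → Prop) :
    α₁ ⊕ α₂ → α₁ ⊕ α₂ → Prop
  | .inl u, .inl v => H₁ u v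
  | .inl _, .inr _ => True
  | .inr _, .inl _ => False
  | .inr u, .inr v => H₂ u v


section Helpers

lemma colourList_cons_cons' {α β : Type*} (c : β → β → α) (a b : β) (t : List β) :
    colourList c (a :: b :: t) = c a b :: colourList c (b :: t) := rfl

lemma colourList_append' {α β : Type*} (c : β → β → α) :
    ∀ (A : List β) (y : β) (B : List β),
      colourList c (A ++ y :: B) = colourList c (A ++ [y]) ++ colourList c (y :: B)
  | [], y, B => by simp [colourList]
  | [a], y, B => by simp [colourList]
  | a :: a' :: A', y, B => by
    have ih := colourList_append' c (a' :: A') y B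
    simp only [List.cons_append, colourList_cons_cons'] at *
    rw [ih]

lemma colourList_eq_map' {α α' β : Type*} (c : β → β → α) (c' : β → β → α') (g : α' → α) :
    ∀ l : List β, l.Chain' (fun x y => c x y = g (c' x y)) →
      colourList c l = (colourList c' l).map g
  | [], _ => rfl
  | [_], _ => rfl
  | a :: b :: t, h => by
    rw [List.Chain', List.isChain_cons_cons] at h
    rw [colourList_cons_cons', colourList_cons_cons', List.map_cons, h.1,
      colourList_eq_map' c c' g (b :: t) h.2]

lemma colourList_map' {α β γ : Type*} (c : β → β → α) (f : γ → β) :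
    ∀ l : List γ, colourList c (l.map f) = colourList (fun x y => c (f x) (f y)) l
  | [] => rfl
  | [_] => rfl
  | a :: b :: t => by
    rw [List.map_cons, List.map_cons, colourList_cons_cons', colourList_cons_cons',
      ← List.map_cons]
    rw [colourList_map' c f (b :: t)]

lemma mem_colourList' {α β : Type*} {c : β → β → α} {P : α → Prop} :
    ∀ {l : List β}, l.Chain' (fun x y => P (c x y)) → ∀ z ∈ colourList c l, P z
  | [], _, z, hz => by simp [colourList] at hz
  | [_], _, z, hz => by simp [colourList] at hz
  | a :: b :: t, h, z, hz => by
    rw [List.Chain', List.isChain_cons_cons] at h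
    rw [colourList_cons_cons', List.mem_cons] at hz
    rcases hz with rfl | hz
    · exact h.1
    · exact mem_colourList' h.2 z hz

lemma chain'_of_forall' {α : Type*} {R : α → α → Prop} (h : ∀ x y, R x y) (l : List α) :
    l.Chain' R := List.isChain_iff_getElem.mpr fun _ _ => h _ _

lemma isHPath_of_map' {α α' β : Type*} {H : α → α → Prop} {H' : α' → α' → Prop}
    {D' D : β → β → Prop} {c : β → β → α} {c' : β → β → α'} {g : α' → α}
    (hg : ∀ a b, H' a b → H (g a) (g b)) (hDD : ∀ x y, D' x y → D x y)
    {l : List β} (hp : IsHPath H' D' c' l)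
    (hcol : l.Chain' fun x y => c x y = g (c' x y)) :
    IsHPath H D c l := by
  obtain ⟨⟨hl, hd, hc⟩, hn⟩ := hp
  refine ⟨⟨hl, hd.imp hDD, ?_⟩, hn⟩
  rw [colourList_eq_map' c c' g l hcol]
  exact (List.isChain_map g).mpr (hc.imp hg)

lemma dropWhile_head_false' {β : Type*} (p : β → Bool) :
    ∀ (l : List β) (x : β) (r : List β), l.dropWhile p = x :: r → p x = false
  | [], x, r, h => by simp at h
  | a :: l, x, r, h => by
    rw [List.dropWhile_cons] at h
    by_cases hpa : p a = true
    · rw [if_pos hpa] at h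
      exact dropWhile_head_false' p l x r h
    · rw [if_neg hpa] at h
      cases h
      simpa using hpa

open Classical in
lemma splice' {α β : Type*} {H : α → α → Prop} {D : β → β → Prop} {c : β → β → α}
    {PL PR : α → Prop} (hLR : ∀ a b, PL a → PR b → H a b)
    {l₁ l₂ : List β} {u v : β}
    (hp₁ : IsHPath H D c l₁) (hp₂ : IsHPath H D c l₂)
    (hPL : l₁.Chain' fun x y => PL (c x y)) (hPR : l₂.Chain' fun x y => PR (c x y))
    (hlast : l₁.getLast? = some v) (hhead : l₂.head? = some v)
    (hu : l₁.head? = some u) (hu2 : u ∉ l₂) :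
    ∃ l, IsHPath H D c l ∧ l.head? = some u ∧ l.getLast? = l₂.getLast? := by
  classical
  obtain ⟨⟨hlen₁, hd₁, hc₁⟩, hn₁⟩ := hp₁
  obtain ⟨⟨hlen₂, hd₂, hc₂⟩, hn₂⟩ := hp₂
  set p : β → Bool := fun z => decide (z ∉ l₂) with hp
  set t := l₁.takeWhile p with ht
  set d := l₁.dropWhile p with hdd
  have htd : t ++ d = l₁ := List.takeWhile_append_dropWhile (p := p) (l := l₁)
  have hvl₂ : v ∈ l₂ := List.mem_of_mem_head? (by rw [hhead]; exact rfl)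
  have htmem : ∀ z ∈ t, z ∉ l₂ := by
    intro z hz
    have := List.mem_takeWhile_imp hz
    simpa [hp] using this
  have hdne : d ≠ [] := by
    intro h
    have hv₁ : v ∈ l₁ := List.mem_of_mem_getLast? (by rw [hlast]; exact rfl)
    rw [← htd, h, List.append_nil] at hv₁
    exact htmem v hv₁ hvl₂
  obtain ⟨x, r, hdxr⟩ := List.exists_cons_of_ne_nil hdne
  have hx₂ : x ∈ l₂ := by
    have hdx : l₁.dropWhile p = x :: r := by rw [← hdd, hdxr]
    have hpx : p x = false := dropWhile_head_false' p l₁ x r hdx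
    simpa [hp] using hpx
  obtain ⟨s, r₂, hsr₂⟩ := List.append_of_mem hx₂
  have hl₁' : l₁ = t ++ x :: r := by rw [← htd, hdxr]
  have hl₁ : l₁ = (t ++ [x]) ++ r := by rw [hl₁']; simp
  have htne : t ≠ [] := by
    intro h
    have hux : u = x := by
      rw [hl₁', h, List.nil_append] at hu
      simpa using hu.symm
    exact hu2 (hux ▸ hx₂)
  obtain ⟨u', t', htu⟩ := List.exists_cons_of_ne_nil htne
  have hu'u : u' = u := by
    rw [hl₁', htu] at hu
    simpa using hu
  subst hu'u
  have hDtx : (t ++ [x]).Chain' D ∧ ∀ a ∈ t.getLast?, D a x := by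
    have h1 := (List.isChain_append.mp (hl₁ ▸ hd₁)).1
    refine ⟨h1, ?_⟩
    have h2 := (List.isChain_append.mp h1).2.2
    intro a ha
    exact h2 a ha x rfl
  have hDxr₂ : (x :: r₂).Chain' D := (List.isChain_append.mp (hsr₂ ▸ hd₂)).2.1
  have hPLtx : (t ++ [x]).Chain' fun a b => PL (c a b) :=
    (List.isChain_append.mp (hl₁ ▸ hPL)).1
  have hPRxr₂ : (x :: r₂).Chain' fun a b => PR (c a b) :=
    (List.isChain_append.mp (hsr₂ ▸ hPR)).2.1
  have hCtx : (colourList c (t ++ [x])).Chain' H := by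
    have heq : colourList c l₁ = colourList c (t ++ [x]) ++ colourList c (x :: r) := by
      rw [hl₁', colourList_append']
    exact (List.isChain_append.mp (heq ▸ hc₁)).1
  have hCxr₂ : (colourList c (x :: r₂)).Chain' H := by
    have heq : colourList c l₂ = colourList c (s ++ [x]) ++ colourList c (x :: r₂) := by
      rw [hsr₂, colourList_append']
    exact (List.isChain_append.mp (heq ▸ hc₂)).2.1
  refine ⟨t ++ x :: r₂, ⟨⟨?_, ?_, ?_⟩, ?_⟩, ?_, ?_⟩
  · rw [htu]; simp [List.length_cons]; omega
  · rw [List.Chain', List.isChain_append]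
    refine ⟨(List.isChain_append.mp hDtx.1).1, hDxr₂, ?_⟩
    intro a ha b hb
    simp only [List.head?_cons, Option.mem_def, Option.some.injEq] at hb
    subst hb
    exact hDtx.2 a ha
  · rw [colourList_append', List.Chain', List.isChain_append]
    refine ⟨hCtx, hCxr₂, ?_⟩
    intro a ha b hb
    have haP : PL a := mem_colourList' hPLtx a (List.mem_of_mem_getLast? ha)
    have hbP : PR b := mem_colourList' hPRxr₂ b (List.mem_of_mem_head? hb)
    exact hLR a b haP hbP
  · refine List.Nodup.append ?_ ?_ ?_
    · exact (ht ▸ List.takeWhile_sublist p).nodup hn₁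
    · have hsub : (x :: r₂).Sublist l₂ := by
        rw [hsr₂]; exact List.sublist_append_right s (x :: r₂)
      exact hsub.nodup hn₂
    · intro z hz hz₂
      have hsub : (x :: r₂) ⊆ l₂ := by
        rw [hsr₂]; exact fun w hw => List.mem_append_right s hw
      exact htmem z hz (hsub hz₂)
  · rw [htu]; rfl
  · rw [hsr₂, List.getLast?_append, List.getLast?_append]
    rw [List.getLast?_eq_getLast (l := x :: r₂) (by simp)]
    rfl

end Helpers

/-- If every `H₁`-arc-coloured digraph has an independent `H₁`-absorbent set,
and likewise for `H₂` (both reflexive), then every `(H₁ • H₂)`-arc-coloured digraph has an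
independent `(H₁ • H₂)`-absorbent set. -/
theorem stmt4 {α₁ α₂ : Type} (H₁ : α₁ → α₁ → Prop) (H₂ : α₂ → α₂ → Prop)
    (hr₁ : Reflexive H₁) (hr₂ : Reflexive H₂)
    (h₁ : ∀ (β : Type) (D : β → β → Prop), Loopless D → ∀ c : β → β → α₁,
      ∃ K : Set β, Indep D K ∧ HAbsorbent H₁ D c K)
    (h₂ : ∀ (β : Type) (D : β → β → Prop), Loopless D → ∀ c : β → β → α₂,
      ∃ K : Set β, Indep D K ∧ HAbsorbent H₂ D c K) :
    ∀ (β : Type) (D : β → β → Prop), Loopless D → ∀ c : β → β → α₁ ⊕ α₂,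
      ∃ K : Set β, Indep D K ∧ HAbsorbent (sumH H₁ H₂) D c K := by
  intro β D hD c
  by_cases hα₂ : Nonempty α₂
  · by_cases hα₁ : Nonempty α₁
    · -- main case: both colour sets inhabited
      obtain ⟨d₁⟩ := hα₁
      obtain ⟨d₂⟩ := hα₂
      obtain ⟨K₁, hK₁i, hK₁a⟩ := h₁ β (fun u v => D u v ∧ (c u v).isLeft)
        (fun v hv => hD v hv.1) (fun u v => Sum.elim id (fun _ => d₁) (c u v))
      obtain ⟨K', hK'i, hK'a⟩ := h₂ {x : β // x ∈ K₁}
        (fun x y => D x.1 y.1) (fun v hv => hD v.1 hv)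
        (fun x y => Sum.elim (fun _ => d₂) id (c x.1 y.1))
      have harc : ∀ x y : β, x ∈ K₁ → y ∈ K₁ → D x y →
          c x y = Sum.inr (Sum.elim (fun _ => d₂) id (c x y)) := by
        intro x y hx hy hxy
        cases h : c x y with
        | inl a => exact absurd ⟨hxy, by rw [h]; rfl⟩ (hK₁i x hx y hy)
        | inr b => simp
      have factA : ∀ w ∈ K₁, w ∉ Subtype.val '' K' → ∃ z ∈ Subtype.val '' K',
          ∃ l : List β, IsHPath (sumH H₁ H₂) D c l ∧
            (l.Chain' fun x y => ∃ a, c x y = Sum.inr a) ∧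
            (∀ m ∈ l, m ∈ K₁) ∧ l.head? = some w ∧ l.getLast? = some z := by
        intro w hw hwK
        have hw' : (⟨w, hw⟩ : {x : β // x ∈ K₁}) ∉ K' := fun h => hwK ⟨⟨w, hw⟩, h, rfl⟩
        obtain ⟨v', hv', lg, hpg, hhg, hlg⟩ := hK'a ⟨w, hw⟩ hw'
        obtain ⟨⟨hl, hd, hcc⟩, hn⟩ := hpg
        have hcol : (lg.map Subtype.val).Chain'
            (fun x y => c x y = Sum.inr (Sum.elim (fun _ => d₂) id (c x y))) := by
          rw [List.Chain', List.isChain_map]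
          exact hd.imp fun {x y} hxy => harc x.1 y.1 x.2 y.2 hxy
        refine ⟨v'.1, ⟨v', hv', rfl⟩, lg.map Subtype.val,
          ⟨⟨by simpa using hl, ?_, ?_⟩, hn.map Subtype.val_injective⟩,
          hcol.imp (fun {x y} h => ⟨_, h⟩), ?_, ?_, ?_⟩
        · rw [List.Chain', List.isChain_map]; exact hd
        · rw [colourList_eq_map' c (fun u v => Sum.elim (fun _ => d₂) id (c u v))
            Sum.inr _ hcol, colourList_map']
          exact (List.isChain_map Sum.inr).mpr (hcc.imp fun {a b} h => h)
        · intro m hm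
          obtain ⟨mγ, _, rfl⟩ := List.mem_map.mp hm
          exact mγ.2
        · rw [List.head?_map, hhg]; rfl
        · rw [List.getLast?_map, hlg]; rfl
      refine ⟨Subtype.val '' K', ?_, ?_⟩
      · rintro u' ⟨x, hx, rfl⟩ v' ⟨y, hy, rfl⟩ hDxy
        exact hK'i x hx y hy hDxy
      · intro u huK
        by_cases huK₁ : u ∈ K₁
        · obtain ⟨z, hz, l, hpl, _, _, hh, hgl⟩ := factA u huK₁ huK
          exact ⟨z, hz, l, hpl, hh, hgl⟩
        · obtain ⟨v, hv, l₁, hpl₁, hh₁, hgl₁⟩ := hK₁a u huK₁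
          have hcol₁ : l₁.Chain'
              (fun x y => c x y = Sum.inl (Sum.elim id (fun _ => d₁) (c x y))) := by
            have hdl := hpl₁.1.2.1
            refine hdl.imp fun {x y} hxy => ?_
            obtain ⟨hDxy, hle⟩ := hxy
            obtain ⟨a, ha⟩ := Sum.isLeft_iff.mp hle
            simp [ha]
          have hpl₁' : IsHPath (sumH H₁ H₂) D c l₁ :=
            isHPath_of_map' (H := sumH H₁ H₂) (H' := H₁) (g := Sum.inl)
              (fun a b h => h) (fun x y h => h.1) hpl₁ hcol₁
          by_cases hvK : v ∈ Subtype.val '' K'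
          · exact ⟨v, hvK, l₁, hpl₁', hh₁, hgl₁⟩
          · obtain ⟨z, hz, l₂, hpl₂, hcol₂, hmem₂, hh₂, hgl₂⟩ := factA v hv hvK
            have hPL : l₁.Chain' fun x y => ∃ a, c x y = Sum.inl a :=
              hcol₁.imp fun {x y} h => ⟨_, h⟩
            obtain ⟨l, hpl, hhl, hgl⟩ := splice'
              (PL := fun w => ∃ a, w = Sum.inl a) (PR := fun w => ∃ a, w = Sum.inr a)
              (fun a b ha hb => by
                obtain ⟨a', rfl⟩ := ha; obtain ⟨b', rfl⟩ := hb; trivial)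
              hpl₁' hpl₂ hPL hcol₂ hgl₁ hh₂ hh₁ (fun hul₂ => huK₁ (hmem₂ u hul₂))
            exact ⟨z, hz, l, hpl, hhl, hgl.trans hgl₂⟩
    · -- α₁ empty: every colour is inr
      have e₁ : IsEmpty α₁ := not_nonempty_iff.mp hα₁
      obtain ⟨K, hKi, hKa⟩ := h₂ β D hD
        (fun u v => Sum.elim (fun a => e₁.elim a) id (c u v))
      refine ⟨K, hKi, ?_⟩
      intro u hu
      obtain ⟨v, hv, l, hpl, hh, hgl⟩ := hKa u hu
      refine ⟨v, hv, l, ?_, hh, hgl⟩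
      refine isHPath_of_map' (H := sumH H₁ H₂) (H' := H₂) (g := Sum.inr)
        (fun a b h => h) (fun x y h => h) hpl ?_
      refine chain'_of_forall' (fun x y => ?_) l
      cases h : c x y with
      | inl a => exact e₁.elim a
      | inr b => simp [h]
  · -- α₂ empty: every colour is inl
    have e₂ : IsEmpty α₂ := not_nonempty_iff.mp hα₂
    obtain ⟨K, hKi, hKa⟩ := h₁ β D hD
      (fun u v => Sum.elim id (fun b => e₂.elim b) (c u v))
    refine ⟨K, hKi, ?_⟩
    intro u hu
    obtain ⟨v, hv, l, hpl, hh, hgl⟩ := hKa u hu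
    refine ⟨v, hv, l, ?_, hh, hgl⟩
    refine isHPath_of_map' (H := sumH H₁ H₂) (H' := H₁) (g := Sum.inl)
      (fun a b h => h) (fun x y h => h) hpl ?_
    refine chain'_of_forall' (fun x y => ?_) l
    cases h : c x y with
    | inl a => simp [h]
    | inr b => exact e₂.elim b
end

section
/- Let H be a reflexive pattern whose complement contains a directed odd cycle (0,1,…,2k,0). Then the H-arc-coloured digraph D consisting of a directed cycle (x₀,…,x_{2k},x₀) with arc (x_i, x_{i+1}) coloured i (indices mod 2k+1) has the property that every H-path in D is a single arc, and consequently D has no independent H-absorbent set. -/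
/-- If the complement of the reflexive pattern `H` contains a directed odd
cycle `(f 0, f 1, …, f 2k, f 0)`, then in the directed `(2k+1)`-cycle with arc `(i, i+1)`
coloured `f i`, every `H`-path is a single arc, and there is no independent `H`-absorbent
set. -/
theorem stmt5 {α : Type} (H : α → α → Prop) (hrefl : Reflexive H) (k : ℕ) (hk : 1 ≤ k)
    (f : Fin (2 * k + 1) → α) (hf : Function.Injective f)
    (hcyc : ∀ i : Fin (2 * k + 1), ¬ H (f i) (f (i + 1))) :
    (∀ l, IsHPath H (fun i j : Fin (2 * k + 1) => j = i + 1) (fun i _ => f i) l →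
        l.length = 2) ∧
      ¬ ∃ S, Indep (fun i j : Fin (2 * k + 1) => j = i + 1) S ∧
          HAbsorbent H (fun i j : Fin (2 * k + 1) => j = i + 1) (fun i _ => f i) S := by
    classical
  have key : ∀ l, IsHPath H (fun i j : Fin (2 * k + 1) => j = i + 1) (fun i _ => f i) l →
      l.length = 2 := by
    rintro l ⟨⟨hlen, hD, hH⟩, _⟩
    match l, hlen with
    | [a, b], _ => rfl
    | a :: b :: c :: t, _ =>
      exfalso
      simp only [List.Chain', List.isChain_cons_cons] at hD
      obtain ⟨hab, hbc, -⟩ := hD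
      have hHab : H (f a) (f b) := by
        have := hH
        simp only [colourList, List.Chain', List.isChain_cons_cons] at this
        exact this.1
      rw [hab] at hHab
      exact hcyc a hHab
  refine ⟨key, ?_⟩
  rintro ⟨S, hind, habs⟩
  have step : ∀ i : Fin (2 * k + 1), i ∈ S ↔ i + 1 ∉ S := by
    intro i
    constructor
    · intro hi hi1
      exact hind i hi (i + 1) hi1 rfl
    · intro hi1
      by_contra hi
      obtain ⟨v, hv, l, hp, hhead, hlast⟩ := habs i hi
      have h2 := key l hp
      match l, h2 with
      | [a, b], _ =>
        obtain ⟨⟨-, hD, -⟩, -⟩ := hp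
        simp only [List.head?, List.getLast?] at hhead hlast
        have ha : a = i := by simpa using hhead
        have hb : b = v := by simpa using hlast
        simp only [List.Chain', List.isChain_cons_cons] at hD
        have hD1 := hD.1
        rw [ha, hb] at hD1
        rw [hD1] at hv
        exact hi1 hv
  have flip2 : ∀ j : Fin (2 * k + 1), j ∈ S ↔ j + 2 ∈ S := by
    intro j
    have h1 := step j
    have h2 := step (j + 1)
    have : j + 1 + 1 = j + 2 := by open Fin.CommRing in ring
    rw [this] at h2
    tauto
  open Fin.NatCast in
  have hind2 : ∀ m : ℕ, (((2 * m : ℕ) : Fin (2 * k + 1)) ∈ S ↔ (0 : Fin (2 * k + 1)) ∈ S) := by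
    intro m
    induction m with
    | zero => simp
    | succ m ih =>
      have : ((2 * (m + 1) : ℕ) : Fin (2 * k + 1)) = ((2 * m : ℕ) : Fin (2 * k + 1)) + 2 := by
        open Fin.CommRing in
        (push_cast; ring)
      rw [this, ← flip2]
      exact ih
  open Fin.NatCast in
  have hlast := step ((2 * k : ℕ) : Fin (2 * k + 1))
  open Fin.NatCast in
  have hz : ((2 * k : ℕ) : Fin (2 * k + 1)) + 1 = 0 := by
    have : (((2 * k : ℕ) : Fin (2 * k + 1)) + 1) = ((2 * k + 1 : ℕ) : Fin (2 * k + 1)) := by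
      push_cast
      open Fin.CommRing in
      ring
    rw [this, Fin.natCast_self]
  rw [hz] at hlast
  have := hind2 k
  tauto
end

section
/- Let H be a pattern containing a directed walk W = (x₀, x₁, …, x_k) such that (i) for each 0 ≤ j ≤ k−1 there exists a colour c_j ∈ V(H) with (x_j, c_j) ∉ A(H), and (ii) (x_k, x₀) ∉ A(H). Then there exists an H-arc-coloured digraph with no H-kernel; that is, H is not a panchromatic pattern by paths. -/
section Stmt11Aux

open List

variable {α : Type}

/-- Pick a non-out-neighbour of `a` in `H` if one exists. -/
noncomputable def ddFn (H : α → α → Prop) (a : α) : α :=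
  @dite _ (∃ t, ¬ H a t) (Classical.propDecidable _) (fun h => h.choose) (fun _ => a)

lemma ddFn_spec {H : α → α → Prop} {a : α} (h : ∃ t, ¬ H a t) : ¬ H a (ddFn H a) := by
  unfold ddFn
  rw [dif_pos h]
  exact h.choose_spec

/-- vertex type: cycle vertices (inl) and pendant vertices (inr). -/
abbrev Vtx (n : ℕ) := ZMod (3 * n) ⊕ ZMod (3 * n)

/-- the digraph: the cycle `a → a+1`, plus a pendant arc at every non-start position. -/
def Dg (n : ℕ) : Vtx n → Vtx n → Prop
  | Sum.inl a, Sum.inl b => b = a + 1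
  | Sum.inl a, Sum.inr b => b = a ∧ a.val % n ≠ 0
  | Sum.inr _, _ => False

/-- the colouring. -/
noncomputable def cg (H : α → α → Prop) (w : List α) (hne : w ≠ []) :
    Vtx w.length → Vtx w.length → α
  | Sum.inl x, Sum.inl _ => w.getD (x.val % w.length) (w.head hne)
  | Sum.inl x, Sum.inr _ => ddFn H (w.getD (x.val % w.length - 1) (w.head hne))
  | Sum.inr _, _ => w.head hne

lemma colourList_length {β : Type*} (c : β → β → α) :
    ∀ l : List β, (colourList c l).length = l.length - 1
  | [] => rfl
  | [_] => rfl
  | a :: b :: t => by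
    show (c a b :: colourList c (b :: t)).length = _
    simp [colourList_length c (b :: t)]

lemma colourList_getElem {β : Type*} (c : β → β → α) :
    ∀ (l : List β) (i : ℕ) (h : i + 1 < l.length),
      (colourList c l)[i]'(by rw [colourList_length]; omega) =
        c (l[i]'(by omega)) (l[i+1]'h)
  | a :: b :: t, 0, h => rfl
  | a :: b :: t, (i+1), h => by
    have hrec := colourList_getElem c (b :: t) i (by simpa using h)
    show (c a b :: colourList c (b :: t))[i+1]'_ = _
    rw [List.getElem_cons_succ]; exact hrec

lemma chainD_getElem {n : ℕ} {l : List (Vtx n)} (hl : l.Chain' (Dg n))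
    (i : ℕ) (h : i + 1 < l.length) : Dg n (l[i]'(by omega)) (l[i+1]'h) := by
  have := List.isChain_iff_getElem.mp hl i (by omega)
  simpa using this

lemma chainH_getElem {n : ℕ} {H : α → α → Prop} {c : Vtx n → Vtx n → α} {l : List (Vtx n)}
    (hc : (colourList c l).Chain' H) (i : ℕ) (h : i + 2 < l.length) :
    H (c (l[i]'(by omega)) (l[i+1]'(by omega))) (c (l[i+1]'(by omega)) (l[i+2]'h)) := by
  have hlen : i < (colourList c l).length - 1 := by rw [colourList_length]; omega
  have := List.isChain_iff_getElem.mp hc i (by omega)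
  rwa [colourList_getElem c l i (by omega), colourList_getElem c l (i+1) (by omega)] at this

lemma res_add {n : ℕ} (hn : 0 < n) {a : ZMod (3*n)} (ha : a.val % n = 0) (i : ℕ) :
    (a + (i : ℕ)).val % n = i % n := by
  haveI : NeZero (3 * n) := ⟨by omega⟩
  have hdvd : n ∣ 3 * n := dvd_mul_left n 3
  rw [ZMod.val_add, ZMod.val_natCast, Nat.mod_mod_of_dvd _ hdvd, Nat.add_mod, ha,
    Nat.mod_mod_of_dvd _ hdvd, Nat.zero_add, Nat.mod_mod]

lemma cg_cycle {H : α → α → Prop} {w : List α} (hne : w ≠ []) (hn : 0 < w.length)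
    {a : ZMod (3 * w.length)} (ha : a.val % w.length = 0) (i : ℕ) (b : ZMod (3 * w.length)) :
    cg H w hne (Sum.inl (a + (i : ℕ))) (Sum.inl b) =
      w[i % w.length]'(Nat.mod_lt i hn) := by
  show w.getD ((a + (i:ℕ)).val % w.length) (w.head hne) = _
  rw [res_add hn ha, List.getD_eq_getElem _ _ (Nat.mod_lt i hn)]

lemma cg_pend {H : α → α → Prop} {w : List α} (hne : w ≠ []) (hn : 0 < w.length)
    {a : ZMod (3 * w.length)} (ha : a.val % w.length = 0) (i : ℕ) (b : ZMod (3 * w.length)) :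
    cg H w hne (Sum.inl (a + (i : ℕ))) (Sum.inr b) =
      ddFn H (w.getD (i % w.length - 1) (w.head hne)) := by
  show ddFn H (w.getD ((a + (i:ℕ)).val % w.length - 1) (w.head hne)) = _
  rw [res_add hn ha]

lemma walk_elems {n : ℕ} {l : List (Vtx n)} (hl : l.Chain' (Dg n)) {a : ZMod (3*n)}
    (hh : l.head? = some (Sum.inl a)) :
    ∀ i, (h : i + 1 < l.length) → l[i]'(by omega) = Sum.inl (a + (i : ℕ)) := by
  have h0 : ∀ (h : 0 < l.length), l[0]'h = Sum.inl a := by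
    intro h
    cases l with
    | nil => simp at h
    | cons x t => simp_all
  intro i
  induction i with
  | zero => intro h; simpa using h0 (by omega)
  | succ i ih =>
    intro h
    have e := ih (by omega)
    have hd := chainD_getElem hl i (by omega)
    rw [e] at hd
    rcases h2 : l[i+1]'(by omega) with b | b
    · rw [h2] at hd
      have hb : b = a + (i:ℕ) + 1 := hd
      rw [hb]; congr 1; push_cast; ring
    · exfalso
      have hd2 := chainD_getElem hl (i+1) h
      rw [h2] at hd2
      rcases h3 : l[i+1+1]'h with d | d <;> rw [h3] at hd2 <;> exact hd2

lemma walk_from_start {H : α → α → Prop} {w : List α} (hne : w ≠ []) (hwalk : w.Chain' H)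
    (hi : ∀ a ∈ w.dropLast, ∃ d, ¬ H a d)
    (hii : ¬ H (w.getLast hne) (w.head hne))
    {l : List (Vtx w.length)} (hlen : 2 ≤ l.length)
    (hl : l.Chain' (Dg w.length)) (hc : (colourList (cg H w hne) l).Chain' H)
    {a : ZMod (3 * w.length)} (ha : a.val % w.length = 0)
    (hh : l.head? = some (Sum.inl a)) :
    ∃ t : ℕ, 1 ≤ t ∧ t ≤ w.length ∧ l.getLast? = some (Sum.inl (a + (t : ℕ))) := by
  have hn : 0 < w.length := List.length_pos_iff.mpr hne
  have hlast : w.getLast hne = w[w.length-1]'(by omega) := List.getLast_eq_getElem hne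
  have hhead : w.head hne = w[0]'(by omega) := List.head_eq_getElem_zero hne
  have hDD : ∀ j : ℕ, (hj : j + 1 < w.length) →
      ¬ H (w[j]'(by omega)) (ddFn H (w[j]'(by omega))) := by
    intro j hj
    refine ddFn_spec (hi _ ?_)
    have hjl : j < w.dropLast.length := by simp [List.length_dropLast]; omega
    have hjd : w.dropLast[j]'hjl = w[j]'(by omega) := List.getElem_dropLast hjl
    rw [← hjd]
    exact List.getElem_mem hjl
  -- step 1 : l.length ≤ w.length + 1
  have hm1 : l.length ≤ w.length + 1 := by
    by_contra hcon
    push_neg at hcon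
    have h1 : l[w.length-1]'(by omega)
        = Sum.inl (a + ((w.length-1 : ℕ) : ZMod (3*w.length))) :=
      walk_elems hl hh (w.length-1) (by omega)
    have h2 : l[w.length-1+1]'(by omega)
        = Sum.inl (a + ((w.length-1+1 : ℕ) : ZMod (3*w.length))) :=
      walk_elems hl hh (w.length-1+1) (by omega)
    have h3 : ∃ b, l[w.length-1+2]'(by omega) = Sum.inl b := by
      rcases Nat.lt_or_ge (w.length+2) l.length with hlt | hge
      · exact ⟨_, walk_elems hl hh (w.length-1+2) (by omega)⟩
      · have hd := chainD_getElem hl (w.length-1+1) (by omega)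
        rw [h2] at hd
        rcases h4 : l[w.length-1+1+1]'(by omega) with b | b
        · exact ⟨b, rfl⟩
        · exfalso
          rw [h4] at hd
          obtain ⟨-, hb2⟩ := hd
          refine hb2 ?_
          rw [res_add hn ha, show w.length-1+1 = w.length from by omega, Nat.mod_self]
    obtain ⟨b, h3⟩ := h3
    have hhh := chainH_getElem hc (w.length-1) (by omega)
    rw [h1, h2, h3] at hhh
    rw [cg_cycle hne hn ha (w.length-1), cg_cycle hne hn ha (w.length-1+1)] at hhh
    simp only [show w.length-1+1 = w.length from by omega, Nat.mod_self,
      Nat.mod_eq_of_lt (show w.length-1 < w.length from by omega)] at hhh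
    rw [hlast, hhead] at hii
    exact hii hhh
  -- step 2 : identify the last element
  have hpre : l[l.length-2]'(by omega)
      = Sum.inl (a + ((l.length-2 : ℕ) : ZMod (3*w.length))) :=
    walk_elems hl hh (l.length-2) (by omega)
  have hd := chainD_getElem hl (l.length-2) (by omega)
  simp only [show l.length-2+1 = l.length-1 from by omega] at hd
  rw [hpre] at hd
  have hgl : l.getLast? = some (l[l.length-1]'(by omega)) := by
    rw [List.getLast?_eq_getElem?]
    exact List.getElem?_eq_getElem (by omega)
  rcases hle : l[l.length-1]'(by omega) with b | b
  · rw [hle] at hd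
    have hb : b = a + ((l.length-2:ℕ) : ZMod (3*w.length)) + 1 := hd
    refine ⟨l.length-1, by omega, by omega, ?_⟩
    rw [hgl, hle, hb]
    congr 2
    rw [show l.length-1 = l.length-2+1 from by omega]
    push_cast
    ring
  · exfalso
    rw [hle] at hd
    obtain ⟨-, hres⟩ := hd
    rw [res_add hn ha] at hres
    have hm2 : 1 ≤ l.length - 2 := by
      by_contra hx
      push_neg at hx
      refine hres ?_
      rw [show l.length - 2 = 0 from by omega]
      exact Nat.zero_mod w.length
    have hm2n : l.length - 2 < w.length := by
      rcases Nat.lt_or_ge (l.length-2) w.length with h' | h'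
      · exact h'
      · exfalso
        have hx : l.length - 2 = w.length := by omega
        exact hres (by rw [hx, Nat.mod_self])
    have hpre2 : l[l.length-3]'(by omega)
        = Sum.inl (a + ((l.length-3 : ℕ) : ZMod (3*w.length))) :=
      walk_elems hl hh (l.length-3) (by omega)
    have hhh := chainH_getElem hc (l.length-3) (by omega)
    simp only [show l.length-3+1 = l.length-2 from by omega,
      show l.length-3+2 = l.length-1 from by omega] at hhh
    rw [hpre2, hpre, hle] at hhh
    rw [cg_cycle hne hn ha (l.length-3), cg_pend hne hn ha (l.length-2)] at hhh
    simp only [Nat.mod_eq_of_lt (show l.length-3 < w.length from by omega),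
      Nat.mod_eq_of_lt hm2n, show l.length-2-1 = l.length-3 from by omega] at hhh
    rw [List.getD_eq_getElem _ _ (show l.length-3 < w.length from by omega)] at hhh
    exact hDD (l.length-3) (by omega) hhh

lemma start_reaches {H : α → α → Prop} {w : List α} (hne : w ≠ []) (hwalk : w.Chain' H)
    {a : ZMod (3 * w.length)} (ha : a.val % w.length = 0) :
    HPathReach H (Dg w.length) (cg H w hne) (Sum.inl a)
      (Sum.inl (a + ((w.length : ℕ) : ZMod (3 * w.length)))) := by
  have hn : 0 < w.length := List.length_pos_iff.mpr hne
  set L : List (Vtx w.length) :=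
    (List.range (w.length+1)).map (fun i => Sum.inl (a + (i:ℕ))) with hL
  have hlen : L.length = w.length + 1 := by simp [hL]
  have hget : ∀ i, (h : i < w.length + 1) → L[i]'(by omega) = Sum.inl (a + (i:ℕ)) := by
    intro i h
    simp [hL]
  refine ⟨L, ⟨⟨by omega, ?_, ?_⟩, ?_⟩, ?_, ?_⟩
  · refine List.isChain_iff_getElem.mpr ?_
    intro i hi
    rw [hlen] at hi
    rw [hget i (by omega), hget (i+1) (by omega)]
    show (a + ((i+1 : ℕ) : ZMod (3*w.length))) = a + ((i:ℕ) : ZMod (3*w.length)) + 1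
    push_cast
    ring
  · refine List.isChain_iff_getElem.mpr ?_
    intro i hi
    rw [colourList_length, hlen] at hi
    rw [colourList_getElem _ L i (by rw [hlen]; omega),
      colourList_getElem _ L (i+1) (by rw [hlen]; omega)]
    rw [hget i (by omega), hget (i+1) (by omega), hget (i+2) (by omega)]
    rw [cg_cycle hne hn ha i, cg_cycle hne hn ha (i+1)]
    simp only [Nat.mod_eq_of_lt (show i < w.length from by omega),
      Nat.mod_eq_of_lt (show i+1 < w.length from by omega)]
    have := List.isChain_iff_getElem.mp hwalk i (by omega)
    simpa using this
  · rw [hL]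
    refine List.Nodup.map_on ?_ ((List.nodup_range (n := w.length+1)))
    intro x hx y hy hxy
    rw [List.mem_range] at hx hy
    have hab : ((x:ℕ) : ZMod (3*w.length)) = ((y:ℕ) : ZMod (3*w.length)) := by
      have := Sum.inl.inj hxy
      exact add_left_cancel this
    have hv := congrArg ZMod.val hab
    rw [ZMod.val_natCast, ZMod.val_natCast, Nat.mod_eq_of_lt (by omega),
      Nat.mod_eq_of_lt (by omega)] at hv
    exact hv
  · rw [hL, List.range_succ_eq_map]
    simp
  · have hg : L.getLast? = some (L[L.length-1]'(by rw [hlen]; omega)) := by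
      rw [List.getLast?_eq_getElem?]
      exact List.getElem?_eq_getElem (by rw [hlen]; omega)
    rw [hg]
    have hidx : L[L.length-1]'(by rw [hlen]; omega) = L[w.length]'(by rw [hlen]; omega) := by
      congr 1
      omega
    rw [hidx, hget w.length (by omega)]


end Stmt11Aux


/-- If `H` contains a directed walk `w` such that every vertex of `w` except
the last has a non-out-neighbour in `H`, and the last vertex of `w` does not dominate the
first, then some `H`-arc-coloured digraph has no `H`-kernel. -/
theorem stmt11 {α : Type} (H : α → α → Prop) (w : List α) (hne : w ≠ [])
    (hwalk : w.Chain' H)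
    (hi : ∀ a ∈ w.dropLast, ∃ d, ¬ H a d)
    (hii : ¬ H (w.getLast hne) (w.head hne)) :
    ∃ (β : Type) (D : β → β → Prop) (c : β → β → α),
      Loopless D ∧ ¬ ∃ K, HKernel H D c K := by
  classical
  have hn : 0 < w.length := List.length_pos_iff.mpr hne
  set n := w.length with hnw
  haveI : NeZero (3 * n) := ⟨by omega⟩
  haveI : Fact (1 < 3 * n) := ⟨by omega⟩
  refine ⟨Vtx n, Dg n, cg H w hne, ?_, ?_⟩
  · intro v
    rcases v with a | a
    · intro hv
      have hv' : a = a + 1 := hv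
      have : (1 : ZMod (3*n)) = 0 := by
        have := left_eq_add.mp hv'
        exact this
      exact one_ne_zero this
    · intro hv; exact hv
  · rintro ⟨K, hind, habs⟩
    -- every pendant vertex is in K
    have hpend : ∀ x : ZMod (3*n), (Sum.inr x : Vtx n) ∈ K := by
      intro x
      by_contra hx
      obtain ⟨v, hv, l, ⟨⟨hlen, hchain, -⟩, -⟩, hhead, -⟩ := habs _ hx
      rcases l with - | ⟨y, l⟩
      · simp at hlen
      rcases l with - | ⟨z, l⟩
      · simp at hlen
      have hy : y = Sum.inr x := by simpa using hhead
      have hD := (List.isChain_cons_cons.mp hchain).1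
      rw [hy] at hD
      rcases z with b | b <;> exact hD
    -- no non-start cycle vertex is in K
    have hint : ∀ a : ZMod (3*n), a.val % n ≠ 0 → (Sum.inl a : Vtx n) ∉ K := by
      intro a hav hK
      have hreach : HPathReach H (Dg n) (cg H w hne) (Sum.inl a) (Sum.inr a) := by
        refine ⟨[Sum.inl a, Sum.inr a], ⟨⟨by norm_num, ?_, ?_⟩, by simp⟩, rfl, by simp⟩
        · exact List.isChain_cons_cons.mpr ⟨⟨rfl, hav⟩, List.isChain_singleton _⟩
        · show List.Chain' H [cg H w hne (Sum.inl a) (Sum.inr a)]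
          exact List.isChain_singleton _
      exact hind _ hK _ (hpend a) (by simp) hreach
    -- if a start is not in K then the next start is in K
    have hstep : ∀ a : ZMod (3*n), a.val % n = 0 → (Sum.inl a : Vtx n) ∉ K →
        (Sum.inl (a + ((n:ℕ) : ZMod (3*n))) : Vtx n) ∈ K := by
      intro a ha haK
      obtain ⟨v, hv, l, ⟨⟨hlen, hcd, hcc⟩, -⟩, hhead, hlast⟩ := habs _ haK
      obtain ⟨t, ht1, ht2, hl⟩ := walk_from_start hne hwalk hi hii hlen hcd hcc ha hhead
      rw [hlast] at hl
      have hv' : v = Sum.inl (a + ((t:ℕ) : ZMod (3*n))) := Option.some_inj.mp hl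
      subst hv'
      have hres0 : (a + ((t:ℕ) : ZMod (3*n))).val % n = 0 := by
        by_contra hcon
        exact hint _ hcon hv
      rw [res_add hn ha] at hres0
      have htn : t = n :=
        Nat.le_antisymm ht2 (Nat.le_of_dvd (by omega) (Nat.dvd_of_mod_eq_zero hres0))
      rw [htn] at hv
      exact hv
    -- if a start is in K then the next start is not in K
    have hstep2 : ∀ a : ZMod (3*n), a.val % n = 0 → (Sum.inl a : Vtx n) ∈ K →
        (Sum.inl (a + ((n:ℕ) : ZMod (3*n))) : Vtx n) ∉ K := by
      intro a ha haK hbK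
      have hne' : (Sum.inl a : Vtx n) ≠ Sum.inl (a + ((n:ℕ) : ZMod (3*n))) := by
        intro hx
        have h1 : a = a + ((n:ℕ) : ZMod (3*n)) := Sum.inl.inj hx
        have h2 : ((n:ℕ) : ZMod (3*n)) = 0 := left_eq_add.mp h1
        have h3 := congrArg ZMod.val h2
        rw [ZMod.val_natCast, Nat.mod_eq_of_lt (by omega), ZMod.val_zero] at h3
        omega
      exact hind _ haK _ hbK hne' (start_reaches hne hwalk ha)
    -- the three starts
    have hres0 : ((0 : ZMod (3*n))).val % n = 0 := by simp
    have hres1 : (((n:ℕ) : ZMod (3*n))).val % n = 0 := by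
      rw [ZMod.val_natCast, Nat.mod_mod_of_dvd _ (dvd_mul_left n 3), Nat.mod_self]
    have hres2 : (((n:ℕ) : ZMod (3*n)) + ((n:ℕ) : ZMod (3*n))).val % n = 0 := by
      rw [show ((n:ℕ) : ZMod (3*n)) + ((n:ℕ) : ZMod (3*n)) = ((n + n : ℕ) : ZMod (3*n)) from by
        push_cast; ring]
      rw [ZMod.val_natCast, Nat.mod_mod_of_dvd _ (dvd_mul_left n 3), Nat.add_mod, Nat.mod_self]
      simp
    have hzero : ((n:ℕ) : ZMod (3*n)) + ((n:ℕ) : ZMod (3*n)) + ((n:ℕ) : ZMod (3*n))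
        = (0 : ZMod (3*n)) := by
      rw [show ((n:ℕ) : ZMod (3*n)) + ((n:ℕ) : ZMod (3*n)) + ((n:ℕ) : ZMod (3*n))
          = ((3 * n : ℕ) : ZMod (3*n)) from by push_cast; ring]
      exact ZMod.natCast_self (3*n)
    by_cases h0 : (Sum.inl (0 : ZMod (3*n)) : Vtx n) ∈ K
    · have h1 := hstep2 0 hres0 h0
      rw [zero_add] at h1
      have h2 := hstep _ hres1 h1
      have h3 := hstep2 _ hres2 h2
      rw [hzero] at h3
      exact h3 h0
    · have h1 := hstep 0 hres0 h0
      rw [zero_add] at h1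
      have h2 := hstep2 _ hres1 h1
      have h3 := hstep _ hres2 h2
      rw [hzero] at h3
      exact h0 h3
end

section
/- Let H be a reflexive pattern and let x, y be true twins in H (distinct vertices with N⁺(x) = N⁺(y) and N⁻(x) = N⁻(y)). Then every H-arc-coloured digraph has an H-kernel if and only if every H_{xy}-arc-coloured digraph has an H_{xy}-kernel, where H_{xy} is the pattern obtained from H by identifying x and y (deleting parallel arcs). -/
lemma colourList_comp {α γ β : Type*} (f : α → γ) (c : β → β → α) :
    ∀ l, colourList (fun u v => f (c u v)) l = (colourList c l).map f
  | [] => rfl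
  | [_] => rfl
  | a :: b :: t => by
    simp [colourList, colourList_comp f c (b :: t)]

lemma reach_iff {α γ β : Type*} (H : α → α → Prop) (H' : γ → γ → Prop) (f : α → γ)
    (hf : ∀ a b, H a b ↔ H' (f a) (f b)) (D : β → β → Prop) (c : β → β → α) (u v : β) :
    HPathReach H D c u v ↔ HPathReach H' D (fun a b => f (c a b)) u v := by
  have key : ∀ l : List β, IsHPath H D c l ↔ IsHPath H' D (fun a b => f (c a b)) l := by
    intro l
    unfold IsHPath IsHWalk
    rw [colourList_comp f c l]; unfold List.Chain'; rw [List.isChain_map]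
    constructor
    · rintro ⟨⟨h1, h2, h3⟩, h4⟩
      exact ⟨⟨h1, h2, h3.imp fun _ _ h => (hf _ _).mp h⟩, h4⟩
    · rintro ⟨⟨h1, h2, h3⟩, h4⟩
      exact ⟨⟨h1, h2, h3.imp fun _ _ h => (hf _ _).mpr h⟩, h4⟩
  unfold HPathReach
  exact exists_congr fun l => and_congr_left' (key l)

lemma kernel_iff {α γ β : Type*} (H : α → α → Prop) (H' : γ → γ → Prop) (f : α → γ)
    (hf : ∀ a b, H a b ↔ H' (f a) (f b)) (D : β → β → Prop) (c : β → β → α) (K : Set β) :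
    HKernel H D c K ↔ HKernel H' D (fun a b => f (c a b)) K := by
  unfold HKernel HIndep HAbsorbent
  simp only [reach_iff H H' f hf D c]

/-- Let `x, y` be true twins in a reflexive pattern `H`. Then every
`H`-arc-coloured digraph has an `H`-kernel iff every `H_{xy}`-arc-coloured digraph has an
`H_{xy}`-kernel, where `H_{xy}` (the contraction of `{x,y}`) is realised as the induced
subdigraph `H - y` on the subtype `{z // z ≠ y}`. -/
theorem stmt12 {α : Type} (H : α → α → Prop) (hrefl : Reflexive H) (x y : α) (hxy : x ≠ y)
    (htwin_out : ∀ z, H x z ↔ H y z) (htwin_in : ∀ z, H z x ↔ H z y) :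
    (∀ (β : Type) (D : β → β → Prop), Loopless D → ∀ c : β → β → α,
        ∃ K, HKernel H D c K) ↔
      (∀ (β : Type) (D : β → β → Prop), Loopless D → ∀ c : β → β → {z : α // z ≠ y},
        ∃ K, HKernel (fun a b : {z : α // z ≠ y} => H a b) D c K) := by
  constructor
  · intro h β D hD c
    obtain ⟨K, hK⟩ := h β D hD (fun u v => (c u v).1)
    refine ⟨K, ?_⟩
    have := (kernel_iff (fun a b : {z : α // z ≠ y} => H a b) H Subtype.val
      (fun a b => Iff.rfl) D c K).mpr hK
    exact this
  · intro h β D hD c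
    classical
    set f : α → {z : α // z ≠ y} := fun a => if ha : a = y then ⟨x, hxy⟩ else ⟨a, ha⟩ with hfdef
    have hf : ∀ a b, H a b ↔ H (f a).1 (f b).1 := by
      intro a b
      by_cases ha : a = y <;> by_cases hb : b = y <;> simp [hfdef, ha, hb]
      · exact ⟨fun _ => hrefl x, fun _ => hrefl y⟩
      · exact (htwin_out b).symm
      · exact (htwin_in a).symm
    obtain ⟨K, hK⟩ := h β D hD (fun u v => f (c u v))
    refine ⟨K, ?_⟩
    exact (kernel_iff H (fun a b : {z : α // z ≠ y} => H a b) f hf D c K).mpr hK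
end

section
/- Let x, y be true twins in a reflexive pattern H, let D be an H-arc-coloured digraph with colouring c, and let c_{xy} be the H_{xy}-arc-colouring of D obtained by recolouring every arc coloured x or y with the contracted vertex v_{xy}, leaving all other colours unchanged. Then for any two vertices u, v of D, a directed path P of D is an H-path (under c) if and only if it is an H_{xy}-path (under c_{xy}); consequently, every H_{xy}-kernel of (D, c_{xy}) is an H-kernel of (D, c). -/
lemma colourList_recol {α β : Type*} (f : α → α) (c : β → β → α) :
    ∀ l, colourList (fun u v => f (c u v)) l = (colourList c l).map f
  | [] => rfl
  | [_] => rfl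
  | a :: b :: t => by
    simp [colourList, colourList_recol f c (b :: t)]

/-- Let `x, y` be true twins in a reflexive pattern `H`, `D` an
`H`-arc-coloured digraph with colouring `c`, and `c'` the `H_{xy}`-colouring obtained by
recolouring every arc coloured `y` with the contracted vertex (represented by `x`). Then
a directed path of `D` is an `H`-path under `c` iff it is an `H_{xy}`-path under `c'`;
consequently every `H_{xy}`-kernel of `(D, c')` is an `H`-kernel of `(D, c)`. -/
theorem stmt13 {α β : Type} [DecidableEq α] (H : α → α → Prop) (hrefl : Reflexive H)
    (x y : α) (hxy : x ≠ y)
    (htwin_out : ∀ z, H x z ↔ H y z) (htwin_in : ∀ z, H z x ↔ H z y)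
    (D : β → β → Prop) (hD : Loopless D) (c : β → β → α) :
    (∀ l, IsHPath H D c l ↔
        IsHPath H D (fun u v => if c u v = y then x else c u v) l) ∧
      ∀ K, HKernel H D (fun u v => if c u v = y then x else c u v) K →
        HKernel H D c K := by
  set f : α → α := fun a => if a = y then x else a with hf
  have h1 : ∀ a b, H (f a) b ↔ H a b := by
    intro a b
    by_cases ha : a = y
    · subst ha; simpa [hf] using (htwin_out b)
    · simp [hf, ha]
  have h2 : ∀ a b, H a (f b) ↔ H a b := by
    intro a b
    by_cases hb : b = y
    · subst hb; simpa [hf] using (htwin_in a)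
    · simp [hf, hb]
  have key : ∀ a b, H (f a) (f b) ↔ H a b := fun a b => (h1 a (f b)).trans (h2 a b)
  have hc' : (fun u v => if c u v = y then x else c u v) = fun u v => f (c u v) := rfl
  have hchain : ∀ L : List α, L.Chain' H ↔ (L.map f).Chain' H := by
    intro L
    simp only [List.Chain', List.isChain_map]
    constructor
    · exact fun h => h.imp fun a b => (key a b).mpr
    · exact fun h => h.imp fun a b => (key a b).mp
  have hpath : ∀ l, IsHPath H D c l ↔
      IsHPath H D (fun u v => if c u v = y then x else c u v) l := by
    intro l
    unfold IsHPath IsHWalk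
    rw [hc', colourList_recol, ← hchain]
  refine ⟨hpath, ?_⟩
  intro K hK
  have hreach : ∀ u v, HPathReach H D c u v ↔
      HPathReach H D (fun u v => if c u v = y then x else c u v) u v := by
    intro u v
    exact ⟨fun ⟨l, hl, h⟩ => ⟨l, (hpath l).mp hl, h⟩,
      fun ⟨l, hl, h⟩ => ⟨l, (hpath l).mpr hl, h⟩⟩
  exact ⟨fun u hu v hv huv hr => hK.1 u hu v hv huv ((hreach u v).mp hr),
    fun u hu => by
      obtain ⟨v, hv, hr⟩ := hK.2 u hu
      exact ⟨v, hv, (hreach u v).mpr hr⟩⟩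
end

section
/- There exist a reflexive pattern H and an H-arc-coloured digraph D such that D has a kernel by H-walks but no H-kernel (kernel by H-paths). Specifically, with H on vertices {a₁, a₂, a₃} having suitable arcs, the digraph D on vertices {x, y, z, w} with the walk (x, y, z, y, w) being an H-walk ending at w has {w} as a kernel by H-walks, while every H-independent-by-paths set of D has cardinality one and none is H-absorbent, so D has no H-kernel. -/
set_option maxRecDepth 20000

namespace Stmt17Aux

/-- Pattern on 3 colours: loops plus arcs `0→1` and `1→2`. -/
def Hb : Fin 3 → Fin 3 → Bool := fun u v =>
  (u == v) || (u == 0 && v == 1) || (u == 1 && v == 2)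

/-- Digraph on 4 vertices with arcs `0→1, 1→2, 2→1, 1→3, 3→0`. -/
def Db : Fin 4 → Fin 4 → Bool := fun u v =>
  (u == 0 && v == 1) || (u == 1 && v == 2) || (u == 2 && v == 1) ||
  (u == 1 && v == 3) || (u == 3 && v == 0)

/-- The arc colouring. -/
def cc : Fin 4 → Fin 4 → Fin 3 := fun u v =>
  if u = 0 ∧ v = 1 then 0 else if u = 1 ∧ v = 2 then 1 else
  if u = 2 ∧ v = 1 then 2 else if u = 1 ∧ v = 3 then 2 else
  if u = 3 ∧ v = 0 then 1 else 0

def Hp : Fin 3 → Fin 3 → Prop := fun u v => Hb u v = true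
def Dp : Fin 4 → Fin 4 → Prop := fun u v => Db u v = true

def chainB {γ : Type*} (R : γ → γ → Bool) : List γ → Bool
  | a :: b :: t => R a b && chainB R (b :: t)
  | _ => true

lemma chainB_iff {γ : Type*} (R : γ → γ → Bool) :
    ∀ l : List γ, chainB R l = true ↔ l.Chain' (fun a b => R a b = true)
  | [] => by simp [chainB, List.Chain']
  | [_] => by simp [chainB, List.Chain']
  | a :: b :: t => by
    simp [chainB, List.Chain', List.isChain_cons_cons, chainB_iff R (b :: t), Bool.and_eq_true, and_comm]

def nodupB {γ : Type*} [DecidableEq γ] : List γ → Bool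
  | [] => true
  | a :: t => !(decide (a ∈ t)) && nodupB t

lemma nodupB_iff {γ : Type*} [DecidableEq γ] :
    ∀ l : List γ, nodupB l = true ↔ l.Nodup
  | [] => by simp [nodupB]
  | a :: t => by simp [nodupB, List.nodup_cons, nodupB_iff t]

def walkB (l : List (Fin 4)) : Bool :=
  decide (2 ≤ l.length) && chainB Db l && chainB Hb (colourList cc l)

def pathB (l : List (Fin 4)) : Bool := walkB l && nodupB l

lemma walkB_iff (l : List (Fin 4)) : walkB l = true ↔ IsHWalk Hp Dp cc l := by
  constructor
  · intro h
    simp only [walkB, Bool.and_eq_true, decide_eq_true_eq] at h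
    exact ⟨h.1.1, (chainB_iff Db l).mp h.1.2, (chainB_iff Hb _).mp h.2⟩
  · rintro ⟨h1, h2, h3⟩
    simp only [walkB, Bool.and_eq_true, decide_eq_true_eq]
    exact ⟨⟨h1, (chainB_iff Db l).mpr h2⟩, (chainB_iff Hb _).mpr h3⟩

lemma pathB_iff (l : List (Fin 4)) : pathB l = true ↔ IsHPath Hp Dp cc l := by
  simp only [pathB, IsHPath, Bool.and_eq_true, walkB_iff, nodupB_iff]

/-- All lists over `Fin 4` of length at most `n`. -/
def allLists : Nat → List (List (Fin 4))
  | 0 => [[]]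
  | n+1 => (allLists n) ++ ((allLists n).flatMap fun l => (List.finRange 4).map (· :: l))

lemma mem_allLists : ∀ (n : Nat) (l : List (Fin 4)), l.length ≤ n → l ∈ allLists n
  | 0, l, h => by simp at h; simp [h, allLists]
  | n+1, [], _ => by
      simp only [allLists, List.mem_append]
      exact Or.inl (mem_allLists n [] (by simp))
  | n+1, a :: t, h => by
      simp only [allLists, List.mem_append, List.mem_flatMap]
      exact Or.inr ⟨t, mem_allLists n t (by simpa using h), by simp⟩

/-- Bounded search for an `H`-path from `u` to `v`. -/
def reachB (u v : Fin 4) : Bool :=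
  (allLists 4).any fun l =>
    pathB l && decide (l.head? = some u) && decide (l.getLast? = some v)

lemma reach_iff (u v : Fin 4) : HPathReach Hp Dp cc u v ↔ reachB u v = true := by
  constructor
  · rintro ⟨l, hp, hh, hg⟩
    have hm : l ∈ allLists 4 := mem_allLists 4 l (by
      simpa using hp.2.length_le_card)
    simp only [reachB, List.any_eq_true]
    refine ⟨l, hm, ?_⟩
    simp [Bool.and_eq_true, (pathB_iff l).mpr hp, hh, hg]
  · intro h
    simp only [reachB, List.any_eq_true, Bool.and_eq_true, decide_eq_true_eq] at h
    obtain ⟨l, _, ⟨hpB, hh⟩, hg⟩ := h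
    exact ⟨l, (pathB_iff l).mp hpB, hh, hg⟩

lemma reach_of_walkB {l : List (Fin 4)} {u v : Fin 4} (h : walkB l = true)
    (hh : l.head? = some u) (hg : l.getLast? = some v) : HWalkReach Hp Dp cc u v :=
  ⟨l, (walkB_iff l).mp h, hh, hg⟩

end Stmt17Aux

/-- There exist a reflexive pattern `H` and an `H`-arc-coloured digraph `D`
having a kernel by `H`-walks but no `H`-kernel (kernel by `H`-paths). -/
theorem stmt17 :
    ∃ (α : Type) (H : α → α → Prop), Reflexive H ∧
      ∃ (β : Type) (D : β → β → Prop) (c : β → β → α),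
        Loopless D ∧ (∃ K, WKernel H D c K) ∧ ¬ ∃ K, HKernel H D c K := by
  refine ⟨Fin 3, Stmt17Aux.Hp, fun u => by fin_cases u <;> rfl, Fin 4, Stmt17Aux.Dp,
    Stmt17Aux.cc, fun v => by fin_cases v <;> simp [Stmt17Aux.Dp, Stmt17Aux.Db], ?_, ?_⟩
  · -- {3} is a kernel by H-walks
    refine ⟨{3}, ?_, ?_⟩
    · intro u hu v hv hne
      simp only [Set.mem_singleton_iff] at hu hv
      exact absurd (hu.trans hv.symm) hne
    · intro u hu
      refine ⟨3, rfl, ?_⟩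
      simp only [Set.mem_singleton_iff] at hu
      fin_cases u
      · exact Stmt17Aux.reach_of_walkB (l := [0,1,2,1,3]) (by decide) rfl rfl
      · exact Stmt17Aux.reach_of_walkB (l := [1,3]) (by decide) rfl rfl
      · exact Stmt17Aux.reach_of_walkB (l := [2,1,3]) (by decide) rfl rfl
      · exact absurd rfl hu
  · -- no H-kernel
    rintro ⟨K, hI, hA⟩
    -- negative reachability facts
    have n03 : ¬ HPathReach Stmt17Aux.Hp Stmt17Aux.Dp Stmt17Aux.cc 0 3 := by
      rw [Stmt17Aux.reach_iff]; decide
    have n31 : ¬ HPathReach Stmt17Aux.Hp Stmt17Aux.Dp Stmt17Aux.cc 3 1 := by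
      rw [Stmt17Aux.reach_iff]; decide
    have n32 : ¬ HPathReach Stmt17Aux.Hp Stmt17Aux.Dp Stmt17Aux.cc 3 2 := by
      rw [Stmt17Aux.reach_iff]; decide
    have n10 : ¬ HPathReach Stmt17Aux.Hp Stmt17Aux.Dp Stmt17Aux.cc 1 0 := by
      rw [Stmt17Aux.reach_iff]; decide
    -- positive reachability facts
    have r01 : HPathReach Stmt17Aux.Hp Stmt17Aux.Dp Stmt17Aux.cc 0 1 := by
      rw [Stmt17Aux.reach_iff]; decide
    have r02 : HPathReach Stmt17Aux.Hp Stmt17Aux.Dp Stmt17Aux.cc 0 2 := by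
      rw [Stmt17Aux.reach_iff]; decide
    have r30 : HPathReach Stmt17Aux.Hp Stmt17Aux.Dp Stmt17Aux.cc 3 0 := by
      rw [Stmt17Aux.reach_iff]; decide
    have r12 : HPathReach Stmt17Aux.Hp Stmt17Aux.Dp Stmt17Aux.cc 1 2 := by
      rw [Stmt17Aux.reach_iff]; decide
    have r13 : HPathReach Stmt17Aux.Hp Stmt17Aux.Dp Stmt17Aux.cc 1 3 := by
      rw [Stmt17Aux.reach_iff]; decide
    have r23 : HPathReach Stmt17Aux.Hp Stmt17Aux.Dp Stmt17Aux.cc 2 3 := by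
      rw [Stmt17Aux.reach_iff]; decide
    by_cases h3 : (3 : Fin 4) ∈ K
    · have h0 : (0 : Fin 4) ∉ K := fun h0 => hI 3 h3 0 h0 (by decide) r30
      have h1 : (1 : Fin 4) ∉ K := fun h1 => hI 1 h1 3 h3 (by decide) r13
      have h2 : (2 : Fin 4) ∉ K := fun h2 => hI 2 h2 3 h3 (by decide) r23
      obtain ⟨v, hv, hr⟩ := hA 0 h0
      fin_cases v
      · exact h0 hv
      · exact h1 hv
      · exact h2 hv
      · exact n03 hr
    · obtain ⟨v, hv, hr⟩ := hA 3 h3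
      have h0 : (0 : Fin 4) ∈ K := by
        fin_cases v
        · exact hv
        · exact absurd hr n31
        · exact absurd hr n32
        · exact absurd hv h3
      have h1 : (1 : Fin 4) ∉ K := fun h1 => hI 0 h0 1 h1 (by decide) r01
      have h2 : (2 : Fin 4) ∉ K := fun h2 => hI 0 h0 2 h2 (by decide) r02
      obtain ⟨w, hw, hrw⟩ := hA 1 h1
      fin_cases w
      · exact n10 hrw
      · exact h1 hw
      · exact h2 hw
      · exact h3 hw
end

section
/- There exist a reflexive pattern H and an H-arc-coloured digraph D such that D has an H-kernel (kernel by H-paths) but no kernel by H-walks. Specifically, there is a 5-vertex digraph D with vertices u, v, y, z (and appropriate arcs and colours) in which {u, v} is an H-kernel, yet (u, y, z, y, v) is an H-walk from u to v, so every independent-by-H-walks set has cardinality one and no single vertex is absorbent by H-walks. -/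
section Stmt18Aux

/-- The example digraph on `Fin 5`. -/
abbrev Dex : Fin 5 → Fin 5 → Prop := fun a b =>
  (a.val, b.val) ∈ [(0,1),(1,2),(2,1),(1,3),(3,4),(4,0),(4,1),(4,2)]

instance : DecidableRel Dex := fun a b => inferInstanceAs (Decidable (_ ∈ _))

/-- The example colouring: each arc gets its own colour. -/
def cex : Fin 5 → Fin 5 → Fin 25 := fun a b => ⟨5 * a.val + b.val, by omega⟩

/-- The example pattern: reflexive, plus the transitions `1→7`, `7→11`, `11→8`. -/
abbrev Hex : Fin 25 → Fin 25 → Prop := fun x y =>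
  x = y ∨ (x.val, y.val) ∈ [(1,7),(7,11),(11,8)]

instance : DecidableRel Hex := fun a b => inferInstanceAs (Decidable (_ ∨ _ ∈ _))

/-- A `Bool`-valued version of `List.Chain'`, for kernel-friendly decidability. -/
def chainB {α : Type*} (p : α → α → Bool) : List α → Bool
  | a :: b :: t => p a b && chainB p (b :: t)
  | _ => true

lemma chainB_iff {α : Type*} (R : α → α → Prop) [DecidableRel R] :
    ∀ l : List α, chainB (fun a b => decide (R a b)) l = true ↔ l.Chain' R
  | [] => by simp [chainB, List.Chain']
  | [a] => by simp [chainB, List.Chain']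
  | a :: b :: t => by
    simp only [List.Chain', List.isChain_cons_cons]
    simp only [chainB, Bool.and_eq_true, decide_eq_true_eq]
    exact and_congr Iff.rfl (chainB_iff R (b :: t))

instance (priority := 2000) decChain' {α : Type*} (R : α → α → Prop) [DecidableRel R]
    (l : List α) : Decidable (l.Chain' R) :=
  decidable_of_iff _ (chainB_iff R l)

instance (l : List (Fin 5)) : Decidable (IsHWalk Hex Dex cex l) :=
  inferInstanceAs (Decidable (2 ≤ l.length ∧ l.Chain' Dex ∧ (colourList cex l).Chain' Hex))

instance (l : List (Fin 5)) : Decidable (IsHPath Hex Dex cex l) :=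
  inferInstanceAs (Decidable (IsHWalk Hex Dex cex l ∧ l.Nodup))

instance : Decidable (Loopless Dex) :=
  inferInstanceAs (Decidable (∀ v, ¬ Dex v v))

lemma aux_walk {α β : Type*} (H : α → α → Prop) (D : β → β → Prop) (c : β → β → α)
    (S : β → α → Prop)
    (hstep : ∀ b x, S b x → ∀ b', D b b' → H x (c b b') → S b' (c b b')) :
    ∀ (t : List β) (a : β) (x : α), S a x → List.Chain' D (a :: t) →
      List.Chain' H (x :: colourList c (a :: t)) →
      ∀ w, (a :: t).getLast? = some w → ∃ y, S w y := by
  intro t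
  induction t with
  | nil =>
    intro a x hS _ _ w hw
    simp only [List.getLast?_singleton, Option.some.injEq] at hw
    exact ⟨x, hw ▸ hS⟩
  | cons b t ih =>
    intro a x hS hD hH w hw
    have hcl : colourList c (a :: b :: t) = c a b :: colourList c (b :: t) := rfl
    rw [hcl] at hH
    simp only [List.Chain', List.isChain_cons_cons] at hD hH
    have hS' : S b (c a b) := hstep a x hS b hD.1 hH.1
    rw [List.getLast?_cons_cons] at hw
    exact ih b (c a b) hS' hD.2 hH.2 w hw

lemma no_walk {α β : Type*} (H : α → α → Prop) (D : β → β → Prop) (c : β → β → α)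
    (u : β) (S : β → α → Prop)
    (hinit : ∀ b, D u b → S b (c u b))
    (hstep : ∀ b x, S b x → ∀ b', D b b' → H x (c b b') → S b' (c b b'))
    (v : β) (hv : ∀ x, ¬ S v x) : ¬ HWalkReach H D c u v := by
  rintro ⟨l, ⟨hlen, hD, hH⟩, hhead, hlast⟩
  cases l with
  | nil => simp at hhead
  | cons a l =>
    simp only [List.head?_cons, Option.some.injEq] at hhead
    subst hhead
    cases l with
    | nil => simp at hlen
    | cons b t =>
      have hcl : colourList c (a :: b :: t) = c a b :: colourList c (b :: t) := rfl
      rw [hcl] at hH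
      simp only [List.Chain', List.isChain_cons_cons] at hD
      rw [List.getLast?_cons_cons] at hlast
      obtain ⟨y, hy⟩ := aux_walk H D c S hstep t b (c a b) (hinit b hD.1) hD.2 hH v hlast
      exact hv y hy

-- walk states reachable from each relevant vertex
lemma nw10 : ¬ HWalkReach Hex Dex cex 1 0 := by
  apply no_walk Hex Dex cex 1 (fun b x => (b.val, x.val) ∈ [(2,7),(1,11),(3,8)])
  · decide
  · decide
  · decide

lemma nw3 : ∀ v : Fin 5, v ≠ 4 → ¬ HWalkReach Hex Dex cex 3 v := by
  intro v hv
  apply no_walk Hex Dex cex 3 (fun b x => (b.val, x.val) ∈ [(4,19)])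
  · decide
  · decide
  · revert hv; revert v; decide

lemma nw43 : ¬ HWalkReach Hex Dex cex 4 3 := by
  apply no_walk Hex Dex cex 4 (fun b x => (b.val, x.val) ∈ [(0,20),(1,21),(2,22)])
  · decide
  · decide
  · decide

lemma nw04 : ¬ HWalkReach Hex Dex cex 0 4 := by
  apply no_walk Hex Dex cex 0 (fun b x => (b.val, x.val) ∈ [(1,1),(2,7),(1,11),(3,8)])
  · decide
  · decide
  · decide

lemma nopr03 : ¬ HPathReach Hex Dex cex 0 3 := by
  rintro ⟨l, hp, hh, hl⟩
  have h5 : l.length ≤ 5 := by simpa using hp.2.length_le_card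
  obtain ⟨⟨h2, hD, hH⟩, hnd⟩ := hp
  rcases l with _ | ⟨a, _ | ⟨b, _ | ⟨c', _ | ⟨d, _ | ⟨e, rest⟩⟩⟩⟩⟩
  · simp at hh
  · simp at h2
  · revert a b; decide
  · revert a b c'; decide
  · revert a b c' d; decide
  · have : rest = [] := by
      simp only [List.length_cons] at h5
      exact List.length_eq_zero_iff.mp (by omega)
    subst this
    revert a b c' d e; decide

lemma comparable_wr : ∀ s t : Fin 5, s ≠ t →
    HWalkReach Hex Dex cex s t ∨ HWalkReach Hex Dex cex t s := by
  have r01 : HWalkReach Hex Dex cex 0 1 := ⟨[0,1], by decide, by decide, by decide⟩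
  have r02 : HWalkReach Hex Dex cex 0 2 := ⟨[0,1,2], by decide, by decide, by decide⟩
  have r03 : HWalkReach Hex Dex cex 0 3 := ⟨[0,1,2,1,3], by decide, by decide, by decide⟩
  have r40 : HWalkReach Hex Dex cex 4 0 := ⟨[4,0], by decide, by decide, by decide⟩
  have r12 : HWalkReach Hex Dex cex 1 2 := ⟨[1,2], by decide, by decide, by decide⟩
  have r13 : HWalkReach Hex Dex cex 1 3 := ⟨[1,3], by decide, by decide, by decide⟩
  have r41 : HWalkReach Hex Dex cex 4 1 := ⟨[4,1], by decide, by decide, by decide⟩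
  have r23 : HWalkReach Hex Dex cex 2 3 := ⟨[2,1,3], by decide, by decide, by decide⟩
  have r42 : HWalkReach Hex Dex cex 4 2 := ⟨[4,2], by decide, by decide, by decide⟩
  have r34 : HWalkReach Hex Dex cex 3 4 := ⟨[3,4], by decide, by decide, by decide⟩
  intro s t hne
  fin_cases s <;> fin_cases t <;>
    first
      | exact absurd rfl hne
      | exact Or.inl r01 | exact Or.inr r01
      | exact Or.inl r02 | exact Or.inr r02
      | exact Or.inl r03 | exact Or.inr r03
      | exact Or.inl r40 | exact Or.inr r40
      | exact Or.inl r12 | exact Or.inr r12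
      | exact Or.inl r13 | exact Or.inr r13
      | exact Or.inl r41 | exact Or.inr r41
      | exact Or.inl r23 | exact Or.inr r23
      | exact Or.inl r42 | exact Or.inr r42
      | exact Or.inl r34 | exact Or.inr r34

end Stmt18Aux

/-- There exist a reflexive pattern `H` and an `H`-arc-coloured digraph `D`
having an `H`-kernel (kernel by `H`-paths) but no kernel by `H`-walks. -/

theorem stmt18 :
    ∃ (α : Type) (H : α → α → Prop), Reflexive H ∧
      ∃ (β : Type) (D : β → β → Prop) (c : β → β → α),
        Loopless D ∧ (∃ K, HKernel H D c K) ∧ ¬ ∃ K, WKernel H D c K := by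
  refine ⟨Fin 25, Hex, fun x => Or.inl rfl, Fin 5, Dex, cex, by decide, ?_, ?_⟩
  · -- K = {0, 3} is an H-kernel
    refine ⟨{0, 3}, ?_, ?_⟩
    · rintro u (rfl | rfl) v (rfl | rfl) hne hr
      · exact hne rfl
      · exact nopr03 hr
      · exact nw3 0 (by decide) ⟨hr.choose, hr.choose_spec.1.1, hr.choose_spec.2⟩
      · exact hne rfl
    · intro w hw
      simp only [Set.mem_insert_iff, Set.mem_singleton_iff, not_or] at hw
      fin_cases w
      · exact absurd rfl hw.1
      · exact ⟨3, Or.inr rfl, [1,3], by decide, by decide, by decide⟩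
      · exact ⟨3, Or.inr rfl, [2,1,3], by decide, by decide, by decide⟩
      · exact absurd rfl hw.2
      · exact ⟨0, Or.inl rfl, [4,0], by decide, by decide, by decide⟩
  · -- no kernel by H-walks
    rintro ⟨K, hInd, hAbs⟩
    -- K is nonempty
    obtain ⟨s, hs⟩ : ∃ s, s ∈ K := by
      by_cases h0 : (0 : Fin 5) ∈ K
      · exact ⟨0, h0⟩
      · obtain ⟨v, hv, -⟩ := hAbs 0 h0
        exact ⟨v, hv⟩
    -- K = {s}
    have hsub : ∀ t, t ∈ K → t = s := by
      intro t ht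
      by_contra hne
      rcases comparable_wr t s hne with h | h
      · exact hInd t ht s hs hne h
      · exact hInd s hs t ht (fun e => hne e.symm) h
    -- pick a non-reacher of s
    have key : ∀ t : Fin 5, t ≠ s → ¬ HWalkReach Hex Dex cex t s → False := by
      intro t hts hnr
      have htK : t ∉ K := fun h => hts (hsub t h)
      obtain ⟨v, hv, hr⟩ := hAbs t htK
      rw [hsub v hv] at hr
      exact hnr hr
    fin_cases s
    · exact key 1 (by decide) nw10
    · exact key 3 (by decide) (nw3 1 (by decide))
    · exact key 3 (by decide) (nw3 2 (by decide))
    · exact key 4 (by decide) nw43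
    · exact key 0 (by decide) nw04
end
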